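/- Let Z be a compact metric standard Borel space, let Y be a finite metric space, equip Z × Y with a metric making it a compact metric space of diameter diam(Z × Y), and let P_t and P_f be Borel probability measures on Z × Y having the same marginal μ on Z, with P_t ≪ P_f. Then W(P_t, P_f) ≤ diam(Z × Y) · sqrt((1/2) · ∫_Z KL(P_t_{Y|z} ‖ P_f_{Y|z}) dμ(z)), where P_t_{Y|z} and P_f_{Y|z} are the conditional distributions on Y given z obtained by disintegrating P_t and P_f with respect to the projection onto Z. -/

import Mathlib

open MeasureTheory ProbabilityTheory
open scoped ENNReal

/-- Dual 1-Wasserstein distance with respect to an explicit distance function `d`: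
the supremum over all functions `φ : X → ℝ` that are 1-Lipschitz for `d` of
`∫ φ dμ − ∫ φ dν`. -/
noncomputable def Wd {X : Type*} [MeasurableSpace X] (d : X → X → ℝ)
    (μ ν : Measure X) : ℝ :=
  sSup {r : ℝ | ∃ φ : X → ℝ, (∀ a b : X, |φ a - φ b| ≤ d a b) ∧
    r = ∫ x, φ x ∂μ - ∫ x, φ x ∂ν}

open Classical in
/-- Kullback–Leibler divergence: `∫ log (dP/dQ) dP` when `P ≪ Q` (and the integrand is
integrable), and `+∞` otherwise. -/
noncomputable def KL {X : Type*} [MeasurableSpace X] (P Q : Measure X) : ℝ≥0∞ :=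
  if P ≪ Q ∧ Integrable (fun x => Real.log (P.rnDeriv Q x).toReal) P
  then ENNReal.ofReal (∫ x, Real.log (P.rnDeriv Q x).toReal ∂P)
  else ⊤

/-! ### Auxiliary lemmas -/

section Aux

open Real Finset

private lemma hasDerivAt_hfun {x : ℝ} (hx : 0 < x) :
    HasDerivAt (fun y => (y+1) * Real.log y - 2*(y-1))
      (Real.log x + (x+1) * x⁻¹ - 2) x := by
  have h1 : HasDerivAt (fun y : ℝ => (y+1) * Real.log y)
      (1 * Real.log x + (x+1) * x⁻¹) x :=
    ((hasDerivAt_id x).add_const 1).mul (Real.hasDerivAt_log hx.ne')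
  have h2 : HasDerivAt (fun y : ℝ => 2*(y-1)) 2 x := by
    simpa using ((hasDerivAt_id x).sub_const 1).const_mul 2
  have h := h1.sub h2
  rw [one_mul] at h
  exact h

private lemma hfun_deriv_nonneg {x : ℝ} (hx : 0 < x) :
    0 ≤ Real.log x + (x+1) * x⁻¹ - 2 := by
  have h := Real.log_le_sub_one_of_pos (inv_pos.2 hx)
  rw [Real.log_inv] at h
  have hxne : x ≠ 0 := hx.ne'
  have : (x+1) * x⁻¹ = 1 + x⁻¹ := by field_simp
  rw [this]; linarith

private lemma hfun_mono : MonotoneOn (fun y => (y+1) * Real.log y - 2*(y-1)) (Set.Ioi 0) := by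
  have hint : interior (Set.Ioi (0:ℝ)) = Set.Ioi 0 := interior_Ioi
  refine monotoneOn_of_deriv_nonneg (convex_Ioi 0) ?_ ?_ ?_
  · intro x hx
    exact ((hasDerivAt_hfun hx).differentiableAt).continuousAt.continuousWithinAt
  · rw [hint]; intro x hx
    exact ((hasDerivAt_hfun hx).differentiableAt).differentiableWithinAt
  · rw [hint]; intro x hx
    rw [(hasDerivAt_hfun hx).deriv]
    exact hfun_deriv_nonneg hx

private lemma gfun_hasDerivAt {x : ℝ} (hx : 0 < x) :
    HasDerivAt (fun y => (2*y+4) * (y * Real.log y - y + 1) - 3*(y-1)^2)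
      (4 * ((x+1) * Real.log x - 2*(x-1))) x := by
  have h1 : HasDerivAt (fun y : ℝ => 2*y+4) 2 x := by
    simpa using ((hasDerivAt_id x).const_mul 2).add_const 4
  have h2 : HasDerivAt (fun y : ℝ => y * Real.log y - y + 1) (Real.log x + 1 - 1) x :=
    ((Real.hasDerivAt_mul_log hx.ne').sub (hasDerivAt_id x)).add_const 1
  have h3 : HasDerivAt (fun y : ℝ => 3*(y-1)^2) (3*(2*(x-1)^1*1)) x :=
    (((hasDerivAt_id x).sub_const 1).pow 2).const_mul 3
  have h := (h1.mul h2).sub h3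
  exact h.congr_deriv (by ring)

private lemma gfun_continuous :
    Continuous (fun y : ℝ => (2*y+4) * (y * Real.log y - y + 1) - 3*(y-1)^2) := by
  have := Real.continuous_mul_log
  continuity

private lemma scalar_pinsker {x : ℝ} (hx : 0 ≤ x) :
    3 * (x - 1)^2 ≤ (2*x + 4) * (x * Real.log x - x + 1) := by
  set g := fun y : ℝ => (2*y+4) * (y * Real.log y - y + 1) - 3*(y-1)^2 with hg
  have hg1 : g 1 = 0 := by simp [hg]
  have key : 0 ≤ g x := by
    rcases le_or_gt x 1 with hx1 | hx1
    · have hanti : AntitoneOn g (Set.Icc 0 1) := by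
        refine antitoneOn_of_deriv_nonpos (convex_Icc 0 1) gfun_continuous.continuousOn ?_ ?_
        · rw [interior_Icc]; intro y hy
          exact ((gfun_hasDerivAt hy.1).differentiableAt).differentiableWithinAt
        · rw [interior_Icc]; intro y hy
          rw [(gfun_hasDerivAt hy.1).deriv]
          have : (fun t => (t+1) * Real.log t - 2*(t-1)) y ≤
              (fun t => (t+1) * Real.log t - 2*(t-1)) 1 :=
            hfun_mono hy.1 (by norm_num) hy.2.le
          simp only [Real.log_one] at this
          nlinarith [this]
      have := hanti (Set.mem_Icc.2 ⟨hx, hx1⟩) (Set.mem_Icc.2 ⟨by norm_num, le_refl 1⟩) hx1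
      rw [hg1] at this; exact this
    · have hmono : MonotoneOn g (Set.Ici 1) := by
        refine monotoneOn_of_deriv_nonneg (convex_Ici 1) gfun_continuous.continuousOn ?_ ?_
        · rw [interior_Ici]; intro y hy
          have : (0:ℝ) < y := lt_trans one_pos hy
          exact ((gfun_hasDerivAt this).differentiableAt).differentiableWithinAt
        · rw [interior_Ici]; intro y hy
          have hy0 : (0:ℝ) < y := lt_trans one_pos hy
          rw [(gfun_hasDerivAt hy0).deriv]
          have : (fun t => (t+1) * Real.log t - 2*(t-1)) 1 ≤
              (fun t => (t+1) * Real.log t - 2*(t-1)) y :=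
            hfun_mono (by norm_num) hy0 hy.le
          simp only [Real.log_one] at this
          nlinarith [this]
      have := hmono (Set.mem_Ici.2 (le_refl 1)) (Set.mem_Ici.2 hx1.le) hx1.le
      rw [hg1] at this; exact this
  simp only [hg] at key
  linarith

private lemma pinsker_fin {Y : Type*} [Fintype Y] (p q : Y → ℝ) (hp : ∀ y, 0 ≤ p y)
    (hq : ∀ y, 0 ≤ q y) (hps : ∑ y, p y = 1) (hqs : ∑ y, q y = 1)
    (hac : ∀ y, q y = 0 → p y = 0) :
    (∑ y, |p y - q y|)^2 ≤ 2 * ∑ y, p y * Real.log (p y / q y) := by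
  set x : Y → ℝ := fun y => p y / q y with hxdef
  have hx0 : ∀ y, 0 ≤ x y := fun y => div_nonneg (hp y) (hq y)
  have hqx : ∀ y, q y * x y = p y := by
    intro y
    rcases eq_or_lt_of_le (hq y) with h | h
    · rw [← h, zero_mul]; exact (hac y h.symm).symm
    · show q y * (p y / q y) = p y
      field_simp [h.ne']
  set u : Y → ℝ := fun y => q y * (3*(x y - 1)^2) / (2*(x y + 2)) with hu
  set v : Y → ℝ := fun y => q y * (2*(x y + 2)) / 3 with hv
  have hu0 : ∀ y, 0 ≤ u y := fun y =>
    div_nonneg (mul_nonneg (hq y) (by positivity)) (by nlinarith [hx0 y])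
  have hv0 : ∀ y, 0 ≤ v y :=
    fun y => div_nonneg (mul_nonneg (hq y) (by nlinarith [hx0 y])) (by norm_num)
  have habs : ∀ y, |p y - q y| = Real.sqrt (u y) * Real.sqrt (v y) := by
    intro y
    rw [← Real.sqrt_mul (hu0 y)]
    have huv : u y * v y = (p y - q y)^2 := by
      have h2 : (0:ℝ) < x y + 2 := by have := hx0 y; linarith
      have : u y * v y = (q y * (x y - 1))^2 := by
        show q y * (3*(x y - 1)^2) / (2*(x y + 2)) * (q y * (2*(x y + 2)) / 3) = (q y * (x y - 1))^2
        rw [div_mul_div_comm, div_eq_iff (by linarith : (0:ℝ) < 2*(x y+2)*3).ne']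
        ring
      rw [this]
      have : q y * (x y - 1) = p y - q y := by
        linear_combination hqx y
      rw [this]
    rw [huv, Real.sqrt_sq_eq_abs]
  have hCS := Finset.sum_mul_sq_le_sq_mul_sq Finset.univ
      (fun y => Real.sqrt (u y)) (fun y => Real.sqrt (v y))
  have hsum_eq : ∑ y, |p y - q y| = ∑ y, Real.sqrt (u y) * Real.sqrt (v y) :=
    Finset.sum_congr rfl fun y _ => habs y
  have hsq : (∑ y, |p y - q y|)^2 ≤ (∑ y, u y) * (∑ y, v y) := by
    rw [hsum_eq]
    calc (∑ y, Real.sqrt (u y) * Real.sqrt (v y))^2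
        ≤ (∑ y, Real.sqrt (u y)^2) * (∑ y, Real.sqrt (v y)^2) := hCS
      _ = (∑ y, u y) * (∑ y, v y) := by
          rw [Finset.sum_congr rfl fun y _ => Real.sq_sqrt (hu0 y),
            Finset.sum_congr rfl fun y _ => Real.sq_sqrt (hv0 y)]
  have hqxsum : ∑ y, q y * x y = 1 := by
    rw [Finset.sum_congr rfl fun y _ => hqx y]; exact hps
  have hvsum : ∑ y, v y = 2 := by
    have : ∀ y, v y = (2/3) * (q y * x y) + (4/3) * q y := by
      intro y; simp only [hv]; ring
    rw [Finset.sum_congr rfl fun y _ => this y, Finset.sum_add_distrib,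
      ← Finset.mul_sum, ← Finset.mul_sum, hqxsum, hqs]
    norm_num
  have husum : ∑ y, u y ≤ ∑ y, p y * Real.log (x y) := by
    have hterm : ∀ y, u y ≤ p y * Real.log (x y) - q y * x y + q y := by
      intro y
      have hsc := scalar_pinsker (hx0 y)
      have h2 : (0:ℝ) < 2*(x y + 2) := by have := hx0 y; linarith
      have hstep : u y ≤ q y * (x y * Real.log (x y) - x y + 1) := by
        rw [hu, div_le_iff₀ h2]
        calc q y * (3*(x y - 1)^2) ≤ q y * ((2*(x y)+4) * (x y * Real.log (x y) - x y + 1)) :=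
              mul_le_mul_of_nonneg_left (scalar_pinsker (hx0 y)) (hq y)
          _ = q y * (x y * Real.log (x y) - x y + 1) * (2*(x y + 2)) := by ring
      calc u y ≤ q y * (x y * Real.log (x y) - x y + 1) := hstep
        _ = q y * x y * Real.log (x y) - q y * x y + q y := by ring
        _ = p y * Real.log (x y) - q y * x y + q y := by rw [hqx y]
    calc ∑ y, u y ≤ ∑ y, (p y * Real.log (x y) - q y * x y + q y) :=
          Finset.sum_le_sum fun y _ => hterm y
      _ = (∑ y, p y * Real.log (x y)) - (∑ y, q y * x y) + ∑ y, q y := by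
          rw [Finset.sum_add_distrib, Finset.sum_sub_distrib]
      _ = ∑ y, p y * Real.log (x y) := by rw [hqxsum, hqs]; ring
  calc (∑ y, |p y - q y|)^2 ≤ (∑ y, u y) * (∑ y, v y) := hsq
    _ = (∑ y, u y) * 2 := by rw [hvsum]
    _ ≤ (∑ y, p y * Real.log (x y)) * 2 := by nlinarith [husum]
    _ = 2 * ∑ y, p y * Real.log (p y / q y) := by rw [mul_comm]

private lemma dist_le_diam_of_compact {X : Type*} (m : MetricSpace X)
    (hc : @CompactSpace X m.toPseudoMetricSpace.toUniformSpace.toTopologicalSpace) (a b : X) :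
    m.dist a b ≤ @Metric.diam X m.toPseudoMetricSpace Set.univ := by
  letI := m
  haveI := hc
  exact Metric.dist_le_diam_of_mem (isCompact_univ.isBounded) trivial trivial

private lemma sum_sub_le_half_osc {Y : Type*} [Fintype Y] [Nonempty Y] (φ : Y → ℝ)
    (p q : Y → ℝ) (D : ℝ) (hφ : ∀ y y', |φ y - φ y'| ≤ D)
    (hps : ∑ y, p y = 1) (hqs : ∑ y, q y = 1) :
    ∑ y, p y * φ y - ∑ y, q y * φ y ≤ (D/2) * ∑ y, |p y - q y| := by
  have hne : (Finset.univ : Finset Y).Nonempty := Finset.univ_nonempty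
  set M := Finset.univ.sup' hne φ with hM
  set mn := Finset.univ.inf' hne φ with hmn
  set c := (M + mn)/2 with hc
  have hMd : M - mn ≤ D := by
    obtain ⟨yM, _, hyM⟩ := Finset.exists_mem_eq_sup' hne φ
    obtain ⟨ym, _, hym⟩ := Finset.exists_mem_eq_inf' hne φ
    rw [hM, hmn, hyM, hym]
    exact le_trans (le_abs_self _) (hφ yM ym)
  have hbound : ∀ y, |φ y - c| ≤ D/2 := by
    intro y
    have h1 : φ y ≤ M := Finset.le_sup' φ (Finset.mem_univ y)
    have h2 : mn ≤ φ y := Finset.inf'_le φ (Finset.mem_univ y)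
    rw [abs_le]
    constructor <;> [skip; skip] <;> simp only [hc] <;> linarith
  have key : ∑ y, p y * φ y - ∑ y, q y * φ y = ∑ y, (p y - q y) * (φ y - c) := by
    have : ∑ y, (p y - q y) * (φ y - c)
        = (∑ y, p y * φ y - ∑ y, q y * φ y) - c * (∑ y, p y - ∑ y, q y) := by
      rw [← Finset.sum_sub_distrib, ← Finset.sum_sub_distrib, Finset.mul_sum,
        ← Finset.sum_sub_distrib]
      exact Finset.sum_congr rfl fun y _ => by ring
    rw [this, hps, hqs]; ring
  rw [key, Finset.mul_sum]
  refine Finset.sum_le_sum fun y _ => ?_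
  calc (p y - q y) * (φ y - c) ≤ |(p y - q y) * (φ y - c)| := le_abs_self _
    _ = |p y - q y| * |φ y - c| := abs_mul _ _
    _ ≤ |p y - q y| * (D/2) := mul_le_mul_of_nonneg_left (hbound y) (abs_nonneg _)
    _ = D/2 * |p y - q y| := mul_comm _ _

private lemma sum_toReal_singleton_eq_one {Y : Type*} [Fintype Y] [MeasurableSpace Y]
    [MeasurableSingletonClass Y] (ν : Measure Y) [IsProbabilityMeasure ν] :
    ∑ y, (ν {y}).toReal = 1 := by
  have h := MeasureTheory.integral_fintype (μ := ν) (f := fun _ => (1:ℝ)) (.of_finite)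
  simpa [measureReal_def] using h.symm

private lemma lintegral_rpow_half_le {Z : Type*} [MeasurableSpace Z] (μ : Measure Z)
    [IsProbabilityMeasure μ] (f : Z → ℝ≥0∞) (hf : Measurable f)
    (ht : ∫⁻ z, f z ∂μ ≠ ⊤) :
    ∫⁻ z, (f z) ^ (1/2 : ℝ) ∂μ ≤ (∫⁻ z, f z ∂μ) ^ (1/2 : ℝ) := by
  set t := ∫⁻ z, f z ∂μ with htdef
  by_cases ht0 : t = 0
  · have hf0 : f =ᵐ[μ] 0 := (lintegral_eq_zero_iff hf).1 ht0
    have : (fun z => (f z) ^ (1/2:ℝ)) =ᵐ[μ] 0 := by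
      filter_upwards [hf0] with z hz
      simp [hz, ENNReal.zero_rpow_of_pos (by norm_num : (0:ℝ) < 1/2)]
    rw [lintegral_congr_ae this]
    simp
  · have hts : t ^ (1/2:ℝ) ≠ 0 := (ENNReal.rpow_pos (pos_iff_ne_zero.2 ht0) ht).ne'
    have htstop : t ^ (1/2:ℝ) ≠ ⊤ := ENNReal.rpow_ne_top_of_nonneg (by norm_num) ht
    have h2ne : 2 * t ^ (1/2:ℝ) ≠ 0 := mul_ne_zero two_ne_zero hts
    have h2net : 2 * t ^ (1/2:ℝ) ≠ ⊤ := ENNReal.mul_ne_top (by norm_num) htstop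
    have hAMGM : ∀ z, (f z) ^ (1/2:ℝ) ≤ (2 * t ^ (1/2:ℝ))⁻¹ * (f z + t) := by
      intro z
      rcases eq_or_ne (f z) ⊤ with hfz | hfz
      · rw [hfz]
        have : (⊤ : ℝ≥0∞) + t = ⊤ := by simp
        rw [this, ENNReal.mul_top (ENNReal.inv_ne_zero.2 h2net)]
        exact le_top
      · have key : (f z) ^ (1/2:ℝ) * (2 * t ^ (1/2:ℝ)) ≤ f z + t := by
          have h1 : (f z) ^ (1/2:ℝ) * t ^ (1/2:ℝ) = (f z * t) ^ (1/2:ℝ) :=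
            (ENNReal.mul_rpow_of_nonneg _ _ (by norm_num)).symm
          have h2 : 2 * (f z * t) ^ (1/2:ℝ) ≤ f z + t := by
            set a := (f z).toReal with ha
            set b := t.toReal with hb
            have hfz' : f z = ENNReal.ofReal a := by rw [ha, ENNReal.ofReal_toReal hfz]
            have htz' : t = ENNReal.ofReal b := by rw [hb, ENNReal.ofReal_toReal ht]
            rw [hfz', htz', ← ENNReal.ofReal_mul ENNReal.toReal_nonneg,
              ENNReal.ofReal_rpow_of_nonneg (mul_nonneg ENNReal.toReal_nonneg
                ENNReal.toReal_nonneg) (by norm_num), ← ENNReal.ofReal_add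
                ENNReal.toReal_nonneg ENNReal.toReal_nonneg,
              ← ENNReal.ofReal_ofNat, ← ENNReal.ofReal_mul (by norm_num)]
            apply ENNReal.ofReal_le_ofReal
            rw [← Real.sqrt_eq_rpow]
            have ha0 : 0 ≤ a := ENNReal.toReal_nonneg
            have hb0 : 0 ≤ b := ENNReal.toReal_nonneg
            show 2 * Real.sqrt (a * b) ≤ a + b
            rw [Real.sqrt_mul ha0 b]
            nlinarith [Real.sq_sqrt ha0, Real.sq_sqrt hb0,
              sq_nonneg (Real.sqrt a - Real.sqrt b), Real.sqrt_nonneg a, Real.sqrt_nonneg b]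
          calc (f z) ^ (1/2:ℝ) * (2 * t ^ (1/2:ℝ))
              = 2 * ((f z) ^ (1/2:ℝ) * t ^ (1/2:ℝ)) := by ring
            _ = 2 * (f z * t) ^ (1/2:ℝ) := by rw [h1]
            _ ≤ f z + t := h2
        rw [← ENNReal.le_div_iff_mul_le (Or.inl h2ne) (Or.inl h2net)] at key
        rwa [ENNReal.div_eq_inv_mul] at key
    calc ∫⁻ z, (f z) ^ (1/2:ℝ) ∂μ ≤ ∫⁻ z, (2 * t ^ (1/2:ℝ))⁻¹ * (f z + t) ∂μ :=
          lintegral_mono hAMGM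
      _ = (2 * t ^ (1/2:ℝ))⁻¹ * ∫⁻ z, (f z + t) ∂μ := by
          rw [lintegral_const_mul' _ _ (ENNReal.inv_ne_top.2 h2ne)]
      _ = (2 * t ^ (1/2:ℝ))⁻¹ * (t + t) := by
          rw [lintegral_add_right _ measurable_const, lintegral_const, measure_univ, mul_one]
      _ = t ^ (1/2:ℝ) := by
          have h12 : t = t ^ (1/2:ℝ) * t ^ (1/2:ℝ) := by
            rw [← ENNReal.rpow_add _ _ ht0 ht]
            norm_num
          rw [← two_mul]
          calc (2 * t ^ (1/2:ℝ))⁻¹ * (2 * t)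
              = (2 * t ^ (1/2:ℝ))⁻¹ * (2 * (t ^ (1/2:ℝ) * t ^ (1/2:ℝ))) := by rw [← h12]
            _ = ((2 * t ^ (1/2:ℝ))⁻¹ * (2 * t ^ (1/2:ℝ))) * t ^ (1/2:ℝ) := by ring
            _ = t ^ (1/2:ℝ) := by rw [ENNReal.inv_mul_cancel h2ne h2net, one_mul]

open Classical in
/-- Explicit formula for `KL` between measures on a finite discrete space. -/
private noncomputable def KLfin {Y : Type*} [Fintype Y] [MeasurableSpace Y]
    (P Q : Measure Y) : ℝ≥0∞ :=
  if ∀ y, Q {y} = 0 → P {y} = 0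
  then ENNReal.ofReal (∑ y, (P {y}).toReal * Real.log ((P {y}).toReal / (Q {y}).toReal))
  else ⊤

private lemma KL_eq_KLfin {Y : Type*} [Fintype Y] [MeasurableSpace Y]
    [DiscreteMeasurableSpace Y] (P Q : Measure Y) [IsFiniteMeasure P] [IsFiniteMeasure Q] :
    KL P Q = KLfin P Q := by
  by_cases hAC : ∀ y, Q {y} = 0 → P {y} = 0
  · have hPQ : P ≪ Q := by
      intro s hs
      rw [measure_null_iff_singleton (Set.to_countable s)] at hs ⊢
      exact fun y hy => hAC y (hs y hy)
    have hInt : Integrable (fun x => Real.log (P.rnDeriv Q x).toReal) P :=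
      .of_finite
    rw [KL, KLfin, if_pos ⟨hPQ, hInt⟩, if_pos hAC]
    congr 1
    rw [MeasureTheory.integral_fintype hInt]
    simp only [measureReal_def]
    refine Finset.sum_congr rfl fun y _ => ?_
    rw [smul_eq_mul]
    rcases eq_or_ne (P {y}) 0 with hPy | hPy
    · rw [hPy]; simp
    · have hQy : Q {y} ≠ 0 := fun h => hPy (hAC y h)
      have hkey : P {y} = P.rnDeriv Q y * Q {y} := by
        conv_lhs => rw [← Measure.withDensity_rnDeriv_eq P Q hPQ]
        rw [withDensity_apply _ (measurableSet_singleton y), lintegral_singleton]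
      have hr : P.rnDeriv Q y = P {y} / Q {y} := by
        rw [hkey, mul_div_assoc, ENNReal.div_self hQy (measure_ne_top Q _), mul_one]
      rw [hr, ENNReal.toReal_div]
  · rw [KLfin, if_neg hAC]
    push_neg at hAC
    obtain ⟨y, hQy, hPy⟩ := hAC
    have hnac : ¬ P ≪ Q := fun h => hPy (h hQy)
    rw [KL, if_neg (fun hc => hnac hc.1)]

private lemma KLfin_pinsker {Y : Type*} [Fintype Y] [MeasurableSpace Y]
    [MeasurableSingletonClass Y] (P Q : Measure Y) [IsProbabilityMeasure P]
    [IsProbabilityMeasure Q] (h : KLfin P Q ≠ ⊤) :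
    ENNReal.ofReal (∑ y, |(P {y}).toReal - (Q {y}).toReal|) ≤ (2 * KLfin P Q) ^ (1/2:ℝ) := by
  classical
  have hcond : ∀ y, Q {y} = 0 → P {y} = 0 := by
    by_contra hc
    rw [KLfin, if_neg hc] at h
    exact h rfl
  rw [KLfin, if_pos hcond] at h ⊢
  set s := ∑ y, (P {y}).toReal * Real.log ((P {y}).toReal / (Q {y}).toReal) with hs
  set L := ∑ y, |(P {y}).toReal - (Q {y}).toReal| with hL
  have hpin : L^2 ≤ 2 * s := by
    refine pinsker_fin (fun y => (P {y}).toReal) (fun y => (Q {y}).toReal)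
      (fun y => ENNReal.toReal_nonneg) (fun y => ENNReal.toReal_nonneg)
      (sum_toReal_singleton_eq_one P) (sum_toReal_singleton_eq_one Q) ?_
    intro y hy
    have hq0 : Q {y} = 0 := by
      have hne := measure_ne_top Q {y}
      have h0 : (Q {y}).toReal = 0 := hy
      exact ((ENNReal.toReal_eq_zero_iff _).1 h0).resolve_right hne
    show (P {y}).toReal = 0
    rw [hcond y hq0, ENNReal.toReal_zero]
  have hL0 : 0 ≤ L := Finset.sum_nonneg fun y _ => abs_nonneg _
  have hs0 : 0 ≤ s := by nlinarith [sq_nonneg L]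
  calc ENNReal.ofReal L ≤ ENNReal.ofReal (Real.sqrt (2*s)) :=
        ENNReal.ofReal_le_ofReal ((Real.le_sqrt hL0 (by linarith)).2 hpin)
    _ = (ENNReal.ofReal (2*s)) ^ (1/2:ℝ) := by
        rw [Real.sqrt_eq_rpow, ← ENNReal.ofReal_rpow_of_nonneg (by linarith) (by norm_num)]
    _ = (2 * ENNReal.ofReal s) ^ (1/2:ℝ) := by
        rw [ENNReal.ofReal_mul (by norm_num), ENNReal.ofReal_ofNat]

end Aux

/-- For probability measures `P_t ≪ P_f` on `Z × Y` (`Z` a compact metric standard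
Borel space, `Y` a finite metric space, `Z × Y` equipped with a metric `m` making it a
compact metric space) having the same `Z`-marginal `μ = P_t.fst`:
`W(P_t, P_f) ≤ diam(Z × Y) · sqrt((1/2) · ∫_Z KL(P_t_{Y|z} ‖ P_f_{Y|z}) dμ(z))`. -/
theorem wasserstein_le_diam_sqrt_conditional_kl {Z Y : Type*}
    [MetricSpace Z] [CompactSpace Z] [MeasurableSpace Z] [BorelSpace Z]
    [StandardBorelSpace Z]
    [Fintype Y] [MetricSpace Y] [MeasurableSpace Y] [DiscreteMeasurableSpace Y]
    [Nonempty Y]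
    (m : MetricSpace (Z × Y))
    (hcomp : @CompactSpace (Z × Y) m.toPseudoMetricSpace.toUniformSpace.toTopologicalSpace)
    (Pt Pf : Measure (Z × Y)) [IsProbabilityMeasure Pt] [IsProbabilityMeasure Pf]
    (hmarg : Pt.fst = Pf.fst) (hac : Pt ≪ Pf) :
    ENNReal.ofReal (Wd m.toPseudoMetricSpace.toDist.dist Pt Pf) ≤
      ENNReal.ofReal (@Metric.diam (Z × Y) m.toPseudoMetricSpace Set.univ) *
        (2⁻¹ * ∫⁻ z, KL (Pt.condKernel z) (Pf.condKernel z) ∂Pt.fst) ^ (1 / 2 : ℝ) := by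
  classical
  set dd := m.toPseudoMetricSpace.toDist.dist with hdd
  set D := @Metric.diam (Z × Y) m.toPseudoMetricSpace Set.univ with hDdef
  have hD0 : 0 ≤ D := @Metric.diam_nonneg (Z × Y) Set.univ m.toPseudoMetricSpace
  have hdistD : ∀ a b : Z × Y, dd a b ≤ D := fun a b => dist_le_diam_of_compact m hcomp a b
  -- nonemptiness
  have hne : Nonempty (Z × Y) := by
    by_contra h
    rw [not_nonempty_iff] at h
    have h1 : Pt Set.univ = 1 := measure_univ
    rw [Set.univ_eq_empty_iff.mpr h, measure_empty] at h1
    exact zero_ne_one h1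
  obtain ⟨x0⟩ := hne
  -- the set S
  set S := {r : ℝ | ∃ φ : Z × Y → ℝ, (∀ a b : Z × Y, |φ a - φ b| ≤ dd a b) ∧
    r = ∫ x, φ x ∂Pt - ∫ x, φ x ∂Pf} with hSdef
  have hWd : Wd dd Pt Pf = sSup S := rfl
  rw [hWd]
  -- rewrite the KL integral
  have hKLre : ∫⁻ z, KL (Pt.condKernel z) (Pf.condKernel z) ∂Pt.fst
      = ∫⁻ z, KLfin (Pt.condKernel z) (Pf.condKernel z) ∂Pt.fst :=
    lintegral_congr fun z => KL_eq_KLfin _ _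
  rw [hKLre]
  set G : Z → ℝ≥0∞ := fun z => KLfin (Pt.condKernel z) (Pf.condKernel z) with hGdef
  -- measurability of G
  have hpm : ∀ y : Y, Measurable (fun z => Pt.condKernel z {y}) := fun y =>
    Kernel.measurable_coe _ (measurableSet_singleton y)
  have hqm : ∀ y : Y, Measurable (fun z => Pf.condKernel z {y}) := fun y =>
    Kernel.measurable_coe _ (measurableSet_singleton y)
  have hGm : Measurable G := by
    have hklm : Measurable (fun z => ∑ y, (Pt.condKernel z {y}).toReal *
        Real.log ((Pt.condKernel z {y}).toReal / (Pf.condKernel z {y}).toReal)) := by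
      refine Finset.measurable_sum _ fun y _ => ?_
      exact ((hpm y).ennreal_toReal).mul (Real.measurable_log.comp
        (((hpm y).ennreal_toReal).div ((hqm y).ennreal_toReal)))
    have hcondm : MeasurableSet {z : Z | ∀ y : Y, Pf.condKernel z {y} = 0 →
        Pt.condKernel z {y} = 0} := by
      have heq : {z : Z | ∀ y : Y, Pf.condKernel z {y} = 0 → Pt.condKernel z {y} = 0}
          = ⋂ y : Y, ({z : Z | Pf.condKernel z {y} = 0}ᶜ ∪ {z : Z | Pt.condKernel z {y} = 0}) := by
        ext z
        simp only [Set.mem_setOf_eq, Set.mem_iInter, Set.mem_union, Set.mem_compl_iff,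
          Set.mem_setOf_eq]
        exact forall_congr' fun y => imp_iff_not_or
      rw [heq]
      exact MeasurableSet.iInter fun y =>
        (((hqm y) (measurableSet_singleton 0)).compl.union ((hpm y) (measurableSet_singleton 0)))
    exact Measurable.ite hcondm (ENNReal.measurable_ofReal.comp hklm) measurable_const
  set I := ∫⁻ z, G z ∂Pt.fst with hIdef
  -- trivial case : D ≤ 0
  rcases le_or_gt D 0 with hD | hD
  · have hzero : sSup S ≤ 0 := by
      refine Real.sSup_le ?_ le_rfl
      rintro r ⟨φ, hφ, rfl⟩
      have hconst : ∀ x, φ x = φ x0 := by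
        intro x
        have h1 : |φ x - φ x0| ≤ 0 := (hφ x x0).trans ((hdistD x x0).trans hD)
        have h2 : |φ x - φ x0| = 0 := le_antisymm h1 (abs_nonneg _)
        rwa [abs_eq_zero, sub_eq_zero] at h2
      have h1 : ∫ x, φ x ∂Pt = φ x0 := by
        rw [show (fun x => φ x) = fun _ => φ x0 from funext hconst]
        simp
      have h2 : ∫ x, φ x ∂Pf = φ x0 := by
        rw [show (fun x => φ x) = fun _ => φ x0 from funext hconst]
        simp
      rw [h1, h2, sub_self]
    rw [ENNReal.ofReal_eq_zero.2 hzero]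
    exact zero_le
  by_cases hItop : I = ⊤
  · rw [hItop, ENNReal.mul_top (by norm_num), ENNReal.top_rpow_of_pos (by norm_num),
      ENNReal.mul_top (by rw [Ne, ENNReal.ofReal_eq_zero]; exact not_le.2 hD)]
    exact le_top
  -- main case
  have hμprob : IsProbabilityMeasure Pt.fst := by infer_instance
  set B := (D/2) * Real.sqrt (2 * I.toReal) with hBdef
  have hB0 : 0 ≤ B := mul_nonneg (by linarith) (Real.sqrt_nonneg _)
  -- per-z probability facts
  have hsum1 : ∀ z, ∑ y, (Pt.condKernel z {y}).toReal = 1 := fun z =>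
    sum_toReal_singleton_eq_one (Pt.condKernel z)
  have hsum2 : ∀ z, ∑ y, (Pf.condKernel z {y}).toReal = 1 := fun z =>
    sum_toReal_singleton_eq_one (Pf.condKernel z)
  set L1 : Z → ℝ := fun z => ∑ y, |(Pt.condKernel z {y}).toReal -
    (Pf.condKernel z {y}).toReal| with hL1def
  have hL1m : Measurable L1 :=
    Finset.measurable_sum _ fun y _ => (((hpm y).ennreal_toReal).sub
      ((hqm y).ennreal_toReal)).abs
  have hL10 : ∀ z, 0 ≤ L1 z := fun z => Finset.sum_nonneg fun y _ => abs_nonneg _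
  have hL1b : ∀ z, L1 z ≤ 2 := by
    intro z
    calc L1 z ≤ ∑ y : Y, ((Pt.condKernel z {y}).toReal + (Pf.condKernel z {y}).toReal) := by
          refine Finset.sum_le_sum fun y _ => (abs_sub _ _).trans ?_
          rw [abs_of_nonneg ENNReal.toReal_nonneg, abs_of_nonneg ENNReal.toReal_nonneg]
      _ = 2 := by rw [Finset.sum_add_distrib, hsum1 z, hsum2 z]; norm_num
  have hL1int : Integrable L1 Pt.fst := by
    refine Integrable.mono' (integrable_const (2:ℝ)) hL1m.aestronglyMeasurable ?_
    filter_upwards with z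
    rw [Real.norm_eq_abs, abs_of_nonneg (hL10 z)]
    exact hL1b z
  -- key lintegral bound for L1
  have haeG : ∀ᵐ z ∂Pt.fst, G z < ⊤ := ae_lt_top hGm hItop
  have hkey : ENNReal.ofReal (∫ z, L1 z ∂Pt.fst) ≤ (2*I) ^ (1/2:ℝ) := by
    rw [MeasureTheory.ofReal_integral_eq_lintegral_ofReal hL1int
      (Filter.Eventually.of_forall hL10)]
    calc ∫⁻ z, ENNReal.ofReal (L1 z) ∂Pt.fst
        ≤ ∫⁻ z, (2 * G z) ^ (1/2:ℝ) ∂Pt.fst := by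
          refine lintegral_mono_ae ?_
          filter_upwards [haeG] with z hz
          exact KLfin_pinsker (Pt.condKernel z) (Pf.condKernel z) hz.ne
      _ ≤ (∫⁻ z, 2 * G z ∂Pt.fst) ^ (1/2:ℝ) := by
          refine lintegral_rpow_half_le _ _ (hGm.const_mul 2) ?_
          rw [lintegral_const_mul' 2 _ (by norm_num)]
          exact ENNReal.mul_ne_top (by norm_num) hItop
      _ = (2*I) ^ (1/2:ℝ) := by rw [lintegral_const_mul' 2 _ (by norm_num)]
  have h2Itop : (2:ℝ≥0∞) * I ≠ ⊤ := ENNReal.mul_ne_top (by norm_num) hItop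
  have hL1intle : ∫ z, L1 z ∂Pt.fst ≤ Real.sqrt (2 * I.toReal) := by
    have h1 : (ENNReal.ofReal (∫ z, L1 z ∂Pt.fst)).toReal ≤ ((2*I) ^ (1/2:ℝ)).toReal := by
      refine ENNReal.toReal_mono ?_ hkey
      exact ENNReal.rpow_ne_top_of_nonneg (by norm_num) h2Itop
    rw [ENNReal.toReal_ofReal (integral_nonneg hL10)] at h1
    have h2 : ((2*I) ^ (1/2:ℝ)).toReal = Real.sqrt (2 * I.toReal) := by
      rw [← ENNReal.toReal_rpow, ENNReal.toReal_mul, Real.sqrt_eq_rpow]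
      norm_num
    rwa [h2] at h1
  -- bound each element of S
  have hbound : ∀ r ∈ S, BddAbove S → r ≤ B := by
    rintro r ⟨φ, hφ, rfl⟩ hbdd
    obtain ⟨bb, hbb⟩ := hbdd
    have hφD : ∀ a b : Z × Y, |φ a - φ b| ≤ D := fun a b => (hφ a b).trans (hdistD a b)
    have hnorm : ∀ x, ‖φ x‖ ≤ |φ x0| + D := by
      intro x
      rw [Real.norm_eq_abs]
      have h1 := abs_sub_abs_le_abs_sub (φ x) (φ x0)
      have h2 := hφD x x0
      linarith
    by_cases ht : AEStronglyMeasurable φ Pt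
    · by_cases hf : AEStronglyMeasurable φ Pf
      · -- main estimate
        have hIt : Integrable φ Pt :=
          Integrable.mono' (integrable_const _) ht (Filter.Eventually.of_forall hnorm)
        have hIf : Integrable φ Pf :=
          Integrable.mono' (integrable_const _) hf (Filter.Eventually.of_forall hnorm)
        have h1 : ∫ x, φ x ∂Pt = ∫ z, (∫ y, φ (z,y) ∂(Pt.condKernel z)) ∂Pt.fst :=
          (Measure.integral_condKernel hIt).symm
        have h2 : ∫ x, φ x ∂Pf = ∫ z, (∫ y, φ (z,y) ∂(Pf.condKernel z)) ∂Pt.fst := by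
          rw [hmarg]
          exact (Measure.integral_condKernel hIf).symm
        have hIA : Integrable (fun z => ∫ y, φ (z,y) ∂(Pt.condKernel z)) Pt.fst :=
          hIt.integral_condKernel
        have hIB : Integrable (fun z => ∫ y, φ (z,y) ∂(Pf.condKernel z)) Pt.fst := by
          rw [hmarg]; exact hIf.integral_condKernel
        rw [h1, h2, ← integral_sub hIA hIB]
        have hpt : ∀ z, (∫ y, φ (z,y) ∂(Pt.condKernel z)) - (∫ y, φ (z,y) ∂(Pf.condKernel z))
            ≤ (D/2) * L1 z := by
          intro z
          rw [MeasureTheory.integral_fintype (f := fun y => φ (z,y)) (μ := Pt.condKernel z) (.of_finite),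
            MeasureTheory.integral_fintype (f := fun y => φ (z,y)) (μ := Pf.condKernel z) (.of_finite)]
          simp only [smul_eq_mul, measureReal_def]
          exact sum_sub_le_half_osc (fun y => φ (z,y)) _ _ D
            (fun y y' => hφD (z,y) (z,y')) (hsum1 z) (hsum2 z)
        calc ∫ z, ((∫ y, φ (z,y) ∂(Pt.condKernel z)) - (∫ y, φ (z,y) ∂(Pf.condKernel z))) ∂Pt.fst
            ≤ ∫ z, (D/2) * L1 z ∂Pt.fst :=
              integral_mono (hIA.sub hIB) (hL1int.const_mul _) hpt
          _ = (D/2) * ∫ z, L1 z ∂Pt.fst := integral_const_mul _ _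
          _ ≤ (D/2) * Real.sqrt (2 * I.toReal) :=
              mul_le_mul_of_nonneg_left hL1intle (by linarith)
          _ = B := rfl
      · -- φ measurable for Pt, not for Pf : S is unbounded, contradiction
        exfalso
        have hIt : Integrable φ Pt :=
          Integrable.mono' (integrable_const _) ht (Filter.Eventually.of_forall hnorm)
        have hmem : ∀ c : ℝ, (∫ x, φ x ∂Pt + c) ∈ S := by
          intro c
          refine ⟨fun x => φ x + c, fun a b => by simpa using hφ a b, ?_⟩
          have h1 : ∫ x, (φ x + c) ∂Pt = ∫ x, φ x ∂Pt + c := by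
            rw [integral_add hIt (integrable_const c), integral_const, measureReal_def, measure_univ,
              ENNReal.toReal_one, one_smul]
          have h2 : ∫ x, (φ x + c) ∂Pf = 0 := by
            refine integral_undef fun hint => hf ?_
            have h3 : Integrable (fun x => (φ x + c) - c) Pf := hint.sub (integrable_const c)
            simpa using h3.aestronglyMeasurable
          rw [h1, h2, sub_zero]
        have := hbb (hmem (bb + 1 - ∫ x, φ x ∂Pt))
        linarith
    · by_cases hf : AEStronglyMeasurable φ Pf
      · -- φ measurable for Pf, not for Pt : S is unbounded, contradiction
        exfalso
        have hIf : Integrable φ Pf :=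
          Integrable.mono' (integrable_const _) hf (Filter.Eventually.of_forall hnorm)
        have hmem : ∀ c : ℝ, (-(∫ x, φ x ∂Pf) - c) ∈ S := by
          intro c
          refine ⟨fun x => φ x + c, fun a b => by simpa using hφ a b, ?_⟩
          have h1 : ∫ x, (φ x + c) ∂Pf = ∫ x, φ x ∂Pf + c := by
            rw [integral_add hIf (integrable_const c), integral_const, measureReal_def, measure_univ,
              ENNReal.toReal_one, one_smul]
          have h2 : ∫ x, (φ x + c) ∂Pt = 0 := by
            refine integral_undef fun hint => ht ?_
            have h3 : Integrable (fun x => (φ x + c) - c) Pt := hint.sub (integrable_const c)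
            simpa using h3.aestronglyMeasurable
          rw [h1, h2]
          ring
        have := hbb (hmem (-bb - 1 - ∫ x, φ x ∂Pf))
        linarith
      · -- φ not measurable for either : r = 0
        rw [integral_undef (fun hint => ht hint.aestronglyMeasurable),
          integral_undef (fun hint => hf hint.aestronglyMeasurable), sub_zero]
        exact hB0
  -- conclude
  by_cases hbdd : BddAbove S
  · have hsup : sSup S ≤ B := Real.sSup_le (fun r hr => hbound r hr hbdd) hB0
    have hJtop : (2:ℝ≥0∞)⁻¹ * I ≠ ⊤ :=
      ENNReal.mul_ne_top (by norm_num) hItop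
    have hBrw : ENNReal.ofReal B = ENNReal.ofReal D * ((2:ℝ≥0∞)⁻¹ * I) ^ (1/2:ℝ) := by
      have hrs : B = D * Real.sqrt ((2⁻¹ * I).toReal) := by
        have hs2 : Real.sqrt 2 * Real.sqrt 2 = 2 := Real.mul_self_sqrt (by norm_num)
        have hs2ne : Real.sqrt 2 ≠ 0 := (Real.sqrt_pos.2 (by norm_num)).ne'
        have h2r : ((2:ℝ≥0∞)⁻¹ * I).toReal = 2⁻¹ * I.toReal := by
          rw [ENNReal.toReal_mul]; norm_num
        rw [hBdef, h2r, Real.sqrt_mul (by norm_num : (0:ℝ) ≤ 2),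
          Real.sqrt_mul (by norm_num : (0:ℝ) ≤ 2⁻¹), Real.sqrt_inv]
        have hinv : (Real.sqrt 2)⁻¹ = Real.sqrt 2 / 2 := by
          field_simp
          rw [Real.sq_sqrt (by norm_num : (0:ℝ) ≤ 2)]
        rw [hinv]
        ring
      rw [hrs, ENNReal.ofReal_mul hD0]
      congr 1
      rw [Real.sqrt_eq_rpow, ← ENNReal.ofReal_rpow_of_nonneg ENNReal.toReal_nonneg
        (by norm_num), ENNReal.ofReal_toReal hJtop]
    rw [← hBrw]
    exact ENNReal.ofReal_le_ofReal hsup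
  · rw [Real.sSup_of_not_bddAbove hbdd, ENNReal.ofReal_zero]
    exact zero_le
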